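/- Let g : B → ℝ on the bonds of the triangular lattice satisfy |g_b| ≤ K Σ_{i=1}^N (1 + dist(b, x_i))^{−3} for points x₁, …, x_N ∈ ℝ². Then for any v with Dv ∈ ℓ²(B) and Dv supported on bonds at distance ≥ r from every x_i, |Σ_b g_b Dv_b| ≤ C K N r^{−2} ‖Dv‖_{ℓ²}, where C is a universal constant. -/

import Mathlib

noncomputable section
open Real Metric

abbrev E2 := EuclideanSpace ℝ (Fin 2)

def la1 : E2 := WithLp.toLp 2 ![1, 0]
def la2 : E2 := WithLp.toLp 2 ![1/2, Real.sqrt 3 / 2]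

def TriLat : Set E2 :=
  {x | ∃ m n : ℤ, x = (3 : ℝ)⁻¹ • (la1 + la2) + m • la1 + n • la2}

def Bonds : Set (E2 × E2) :=
  {p | p.1 ∈ TriLat ∧ p.2 ∈ TriLat ∧ ‖p.2 - p.1‖ = 1}

namespace S17

def o : E2 := (3 : ℝ)⁻¹ • (la1 + la2)

def f (z : ℤ × ℤ) : E2 := o + (z.1 : ℝ) • la1 + (z.2 : ℝ) • la2

lemma comb_apply (a b : ℝ) :
    (a • la1 + b • la2) 0 = a + b * (1/2) ∧ (a • la1 + b • la2) 1 = b * (Real.sqrt 3 / 2) := by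
  constructor <;> simp [la1, la2] <;> ring

lemma norm_comb (a b : ℝ) : ‖a • la1 + b • la2‖ ^ 2 = a^2 + a*b + b^2 := by
  obtain ⟨h0, h1⟩ := comb_apply a b
  rw [EuclideanSpace.norm_eq, Fin.sum_univ_two, h0, h1]
  rw [Real.sq_sqrt (by positivity)]
  have h3 : Real.sqrt 3 ^ 2 = 3 := Real.sq_sqrt (by norm_num)
  simp only [Real.norm_eq_abs, sq_abs]
  nlinarith [h3]

lemma mem_trilat_iff {x : E2} : x ∈ TriLat ↔ ∃ z : ℤ × ℤ, x = f z := by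
  constructor
  · rintro ⟨m, n, rfl⟩
    exact ⟨(m, n), by simp [f, o, Int.cast_smul_eq_zsmul]⟩
  · rintro ⟨⟨m, n⟩, rfl⟩
    exact ⟨m, n, by simp [f, o, Int.cast_smul_eq_zsmul]⟩

lemma f_sub (z w : ℤ × ℤ) :
    f z - f w = ((z.1 - w.1 : ℤ) : ℝ) • la1 + ((z.2 - w.2 : ℤ) : ℝ) • la2 := by
  simp only [f]; push_cast; module

def dirs : Fin 6 → ℤ × ℤ := ![(1,0), (-1,0), (0,1), (0,-1), (1,-1), (-1,1)]

lemma dir_classify {m n : ℤ} (h : m^2 + m*n + n^2 = 1) : ∃ d : Fin 6, (m, n) = dirs d := by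
  have hm : m^2 ≤ 1 := by nlinarith [sq_nonneg (m + 2*n), sq_nonneg (m+n), sq_nonneg (m-n)]
  have hn : n^2 ≤ 1 := by nlinarith [sq_nonneg (2*m + n), sq_nonneg (m+n), sq_nonneg (m-n)]
  have hm' : -1 ≤ m ∧ m ≤ 1 := abs_le.mp (by nlinarith [sq_abs m] : |m| ≤ 1)
  have hn' : -1 ≤ n ∧ n ≤ 1 := abs_le.mp (by nlinarith [sq_abs n] : |n| ≤ 1)
  obtain ⟨h1, h2⟩ := hm'; obtain ⟨h3, h4⟩ := hn'
  interval_cases m <;> interval_cases n <;> simp_all <;>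
    first
      | exact ⟨0, rfl⟩ | exact ⟨1, rfl⟩ | exact ⟨2, rfl⟩
      | exact ⟨3, rfl⟩ | exact ⟨4, rfl⟩ | exact ⟨5, rfl⟩
      | omega

lemma bond_repr {b : E2 × E2} (hb : b ∈ Bonds) :
    ∃ z : ℤ × ℤ, ∃ d : Fin 6, b.1 = f z ∧ b.2 = f (z + dirs d) := by
  obtain ⟨h1, h2, h3⟩ := hb
  obtain ⟨z, hz⟩ := mem_trilat_iff.mp h1
  obtain ⟨w, hw⟩ := mem_trilat_iff.mp h2
  have hnorm : ‖f w - f z‖ ^ 2 = 1 := by rw [← hz, ← hw, h3]; norm_num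
  rw [f_sub, norm_comb] at hnorm
  have hint : ((w.1 - z.1)^2 + (w.1 - z.1)*(w.2 - z.2) + (w.2 - z.2)^2 : ℤ) = 1 := by
    exact_mod_cast hnorm
  obtain ⟨d, hd⟩ := dir_classify hint
  refine ⟨z, d, hz, ?_⟩
  have h1 : w.1 - z.1 = (dirs d).1 := by rw [← hd]
  have h2 : w.2 - z.2 = (dirs d).2 := by rw [← hd]
  have hzd : z + dirs d = (z.1 + (dirs d).1, z.2 + (dirs d).2) := rfl
  have hw2 : w = z + dirs d := by
    rw [hzd, Prod.ext_iff]
    constructor <;> simp <;> linarith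
  rw [hw, hw2]

lemma coords (x : E2) : ∃ α β : ℝ, ∀ z : ℤ × ℤ,
    f z - x = ((z.1 : ℝ) - α) • la1 + ((z.2 : ℝ) - β) • la2 := by
  set c0 : ℝ := (x - o) 0 with hc0
  set c1 : ℝ := (x - o) 1 with hc1
  have h3 : Real.sqrt 3 ≠ 0 := by positivity
  refine ⟨c0 - c1 / Real.sqrt 3, 2 * c1 / Real.sqrt 3, fun z => ?_⟩
  have key : x - o = (c0 - c1 / Real.sqrt 3) • la1 + (2 * c1 / Real.sqrt 3) • la2 := by
    obtain ⟨g0, g1⟩ := comb_apply (c0 - c1 / Real.sqrt 3) (2 * c1 / Real.sqrt 3)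
    ext i
    fin_cases i
    all_goals have h9 : Real.sqrt 3 * Real.sqrt 3 = 3 := Real.mul_self_sqrt (by norm_num)
    · show (x - o) 0 = ((c0 - c1 / Real.sqrt 3) • la1 + (2 * c1 / Real.sqrt 3) • la2) 0
      rw [g0]; rw [← hc0]; field_simp; nlinarith [h9]
    · show (x - o) 1 = ((c0 - c1 / Real.sqrt 3) • la1 + (2 * c1 / Real.sqrt 3) • la2) 1
      rw [g1]; rw [← hc1]; field_simp <;> nlinarith [h9]
  have : f z - x = ((z.1:ℝ) • la1 + (z.2:ℝ) • la2) - (x - o) := by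
    simp only [f]; abel
  rw [this, key]
  module

/-! ### tail sums -/

lemma step5 (u : ℝ) (hu : 1 ≤ u) : (u^5)⁻¹ + 5*(((u+1)^4))⁻¹ ≤ 5*((u^4))⁻¹ := by
  have h1 : (0:ℝ) < u^5 := by positivity
  have h2 : (0:ℝ) < (u+1)^4 := by positivity
  have h3 : (0:ℝ) < u^4 := by positivity
  rw [← sub_nonneg]
  have key : 5*((u^4))⁻¹ - ((u^5)⁻¹ + 5*(((u+1)^4))⁻¹)
      = (5*u*(u+1)^4 - (u+1)^4 - 5*u^5) / (u^5 * (u+1)^4) := by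
    field_simp
    ring
  rw [key]
  apply div_nonneg _ (by positivity)
  nlinarith [sq_nonneg (u-1), sq_nonneg u, pow_pos (by linarith : (0:ℝ) < u) 3,
    mul_pos (pow_pos (by linarith : (0:ℝ) < u) 2) (pow_pos (by linarith : (0:ℝ) < u) 2)]

def tailf (R : ℝ) (k : ℕ) : ℝ := if R ≤ 1 + (k:ℝ) then (((1:ℝ)+k)^5)⁻¹ else 0

lemma tailf_nonneg (R : ℝ) (k : ℕ) : 0 ≤ tailf R k := by
  unfold tailf; split <;> positivity

lemma tail_key (R : ℝ) (hR : 1 ≤ R) (M : ℕ) :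
    ∑ k ∈ Finset.range M, tailf R k + 5 * (((max R ((M:ℝ)+1))^4))⁻¹ ≤ 6 * ((R^4))⁻¹ := by
  induction M with
  | zero =>
    simp only [Finset.range_zero, Finset.sum_empty, Nat.cast_zero, zero_add]
    rw [max_eq_left (by linarith)]
    have h4 : (0:ℝ) ≤ (R^4)⁻¹ := by positivity
    linarith
  | succ M ih =>
    rw [Finset.sum_range_succ]
    have goal2 : tailf R M + 5 * ((max R ((M:ℝ)+1+1))^4)⁻¹ ≤ 5 * ((max R ((M:ℝ)+1))^4)⁻¹ := by
      by_cases h : R ≤ 1 + (M:ℝ)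
      · have hm1 : max R ((M:ℝ)+1) = (M:ℝ)+1 := max_eq_right (by linarith)
        have hm2 : max R ((M:ℝ)+1+1) = (M:ℝ)+1+1 := max_eq_right (by linarith)
        rw [hm1, hm2]
        have := step5 ((M:ℝ)+1) (by linarith [Nat.cast_nonneg (α := ℝ) M])
        unfold tailf
        rw [if_pos h]
        have e1 : (1:ℝ) + (M:ℝ) = (M:ℝ)+1 := by ring
        rw [e1]
        linarith [this]
      · unfold tailf
        rw [if_neg h]
        rw [zero_add]
        have hmono : max R ((M:ℝ)+1) ≤ max R ((M:ℝ)+1+1) := by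
          apply max_le_max le_rfl; linarith
        have hp1 : (0:ℝ) < max R ((M:ℝ)+1) := lt_of_lt_of_le (by linarith) (le_max_left _ _)
        have : (max R ((M:ℝ)+1))^4 ≤ (max R ((M:ℝ)+1+1))^4 :=
          pow_le_pow_left₀ (le_of_lt hp1) hmono 4
        have := inv_anti₀ (by positivity) this
        linarith
    have : ((M:ℝ)+1) = ((M+1 : ℕ) : ℝ) := by push_cast; ring
    rw [← this]
    linarith

lemma tail5_ge1 (R : ℝ) (hR : 1 ≤ R) :
    Summable (tailf R) ∧ ∑' k, tailf R k ≤ 6 * ((R^4))⁻¹ := by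
  have hb : ∀ M, ∑ k ∈ Finset.range M, tailf R k ≤ 6 * ((R^4))⁻¹ := by
    intro M
    have h1 := tail_key R hR M
    have hpos : (0:ℝ) < max R ((M:ℝ)+1) := lt_of_lt_of_le (by linarith) (le_max_left _ _)
    have h2 : 0 ≤ 5 * ((max R ((M:ℝ)+1))^4)⁻¹ := by positivity
    linarith
  have hs : Summable (tailf R) := summable_of_sum_range_le (tailf_nonneg R) hb
  exact ⟨hs, Summable.tsum_le_of_sum_range_le hs hb⟩

lemma tail5 (R : ℝ) (hR : 0 < R) :
    Summable (tailf R) ∧ ∑' k, tailf R k ≤ 6 * ((R^4))⁻¹ := by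
  rcases le_or_gt 1 R with h | h
  · exact tail5_ge1 R h
  · have heq : tailf R = tailf 1 := by
      funext k
      unfold tailf
      have hk : (0:ℝ) ≤ k := Nat.cast_nonneg k
      rw [if_pos (by linarith), if_pos (by linarith)]
    obtain ⟨hs1, ht1⟩ := tail5_ge1 1 le_rfl
    rw [heq]
    refine ⟨hs1, le_trans ht1 ?_⟩
    have h4 : R^4 ≤ 1 := le_of_lt (pow_lt_one₀ (le_of_lt hR) h (by norm_num))
    have h5 : (0:ℝ) < R^4 := by positivity
    have : (1:ℝ) ≤ (R^4)⁻¹ := by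
      rw [le_inv_comm₀ one_pos h5]
      simpa using h4
    norm_num
    linarith

/-! ### the ℤ² majorant -/

def kz (m0 n0 : ℤ) (z : ℤ × ℤ) : ℕ := (z.1 - m0).natAbs + (z.2 - n0).natAbs

def sig (m0 n0 : ℤ) (z : ℤ × ℤ) : ℕ × ℤ × Bool :=
  (kz m0 n0 z, z.1 - m0, decide (0 ≤ z.2 - n0))

lemma sig_inj (m0 n0 : ℤ) : Function.Injective (sig m0 n0) := by
  intro z z' h
  simp only [sig, Prod.ext_iff, kz] at h
  obtain ⟨h1, h2, h3⟩ := h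
  have h3' : (0 ≤ z.2 - n0) ↔ (0 ≤ z'.2 - n0) := by simpa [decide_eq_decide] using h3
  have e1 : z.1 = z'.1 := by omega
  have e2 : z.2 = z'.2 := by omega
  exact Prod.ext_iff.mpr ⟨e1, e2⟩

def Tmaj (r : ℝ) (q : ℕ × ℤ × Bool) : ℝ :=
  if q.2.1.natAbs ≤ q.1 ∧ r/5 ≤ 1 + (q.1:ℝ) then (((1:ℝ)+q.1)^6)⁻¹ else 0

lemma Tmaj_nonneg (r : ℝ) (q : ℕ × ℤ × Bool) : 0 ≤ Tmaj r q := by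
  unfold Tmaj; split <;> positivity

lemma Tmaj_slice (r : ℝ) (k : ℕ) :
    Summable (fun ps : ℤ × Bool => Tmaj r (k, ps)) ∧
      ∑' ps : ℤ × Bool, Tmaj r (k, ps) ≤ 6 * tailf (r/5) k := by
  classical
  set S : Finset (ℤ × Bool) := (Finset.Icc (-(k:ℤ)) (k:ℤ)) ×ˢ (Finset.univ : Finset Bool) with hS
  have hsupp : ∀ ps : ℤ × Bool, ps ∉ S → Tmaj r (k, ps) = 0 := by
    intro ps hps
    have : ¬ (ps.1.natAbs ≤ k) := by
      intro hcon
      apply hps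
      rw [hS]
      refine Finset.mem_product.mpr ⟨?_, Finset.mem_univ _⟩
      rw [Finset.mem_Icc]
      omega
    unfold Tmaj
    rw [if_neg]
    tauto
  have hsummable : Summable (fun ps : ℤ × Bool => Tmaj r (k, ps)) :=
    summable_of_ne_finset_zero hsupp
  refine ⟨hsummable, ?_⟩
  rw [tsum_eq_sum hsupp]
  have hcard : S.card = (2*k+1) * 2 := by
    rw [hS, Finset.card_product]
    simp [Int.card_Icc]
    omega
  have hbound : ∀ ps ∈ S, Tmaj r (k, ps) ≤ (if r/5 ≤ 1 + (k:ℝ) then (((1:ℝ)+k)^6)⁻¹ else 0) := by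
    intro ps _
    unfold Tmaj
    by_cases h1 : ps.1.natAbs ≤ k ∧ r/5 ≤ 1 + (k:ℝ)
    · rw [if_pos h1, if_pos h1.2]
    · rw [if_neg h1]
      split <;> positivity
  calc ∑ ps ∈ S, Tmaj r (k, ps)
      ≤ S.card • (if r/5 ≤ 1 + (k:ℝ) then (((1:ℝ)+k)^6)⁻¹ else 0) :=
        Finset.sum_le_card_nsmul S _ _ hbound
    _ ≤ 6 * tailf (r/5) k := by
        rw [hcard, nsmul_eq_mul]
        unfold tailf
        split
        · push_cast
          have hX : (0:ℝ) < 1 + k := by positivity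
          have hrw : ((2*(k:ℝ)+1)*2) * (((1:ℝ)+k)^6)⁻¹
              = ((2*(k:ℝ)+1)*2/(1+k)) * (((1:ℝ)+k)^5)⁻¹ := by
            field_simp
          rw [hrw]
          have h2 : (2*(k:ℝ)+1)*2/(1+k) ≤ 6 := by
            rw [div_le_iff₀ hX]; linarith
          have h3 : (0:ℝ) ≤ ((1+(k:ℝ))^5)⁻¹ := by positivity
          nlinarith [mul_le_mul_of_nonneg_right h2 h3]
        · simp

lemma Tmaj_total (r : ℝ) (hr : 1 ≤ r) :
    Summable (Tmaj r) ∧ ∑' q : ℕ × ℤ × Bool, Tmaj r q ≤ 36 * (((r/5))^4)⁻¹ := by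
  have h5 : (0:ℝ) < r/5 := by linarith
  obtain ⟨hts, htb⟩ := tail5 (r/5) h5
  have hnn : 0 ≤ Tmaj r := fun q => Tmaj_nonneg r q
  have hsum2 : Summable (fun k : ℕ => ∑' ps : ℤ × Bool, Tmaj r (k, ps)) :=
    Summable.of_nonneg_of_le (fun k => tsum_nonneg (fun ps => Tmaj_nonneg _ _))
      (fun k => (Tmaj_slice r k).2) (hts.mul_left 6)
  have hsummable : Summable (Tmaj r) :=
    (summable_prod_of_nonneg hnn).mpr ⟨fun k => (Tmaj_slice r k).1, hsum2⟩
  refine ⟨hsummable, ?_⟩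
  rw [Summable.tsum_prod' hsummable (fun k => (Tmaj_slice r k).1)]
  calc ∑' k, ∑' ps : ℤ × Bool, Tmaj r (k, ps)
      ≤ ∑' k, 6 * tailf (r/5) k :=
        Summable.tsum_le_tsum (fun k => (Tmaj_slice r k).2) hsum2 (hts.mul_left 6)
    _ = 6 * ∑' k, tailf (r/5) k := tsum_mul_left
    _ ≤ 6 * (6 * ((r/5)^4)⁻¹) := mul_le_mul_of_nonneg_left htb (by norm_num)
    _ = 36 * ((r/5)^4)⁻¹ := by ring

/-! ### the lattice sum -/

def wfun (x : E2) (r : ℝ) (z : ℤ × ℤ) : ℝ :=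
  if r ≤ ‖f z - x‖ then ((1+‖f z - x‖)^6)⁻¹ else 0

lemma wfun_nonneg (x : E2) (r : ℝ) (z : ℤ × ℤ) : 0 ≤ wfun x r z := by
  unfold wfun; split <;> positivity


lemma pw_arith (r d u v P Q : ℝ) (hr : 1 ≤ r) (hd : r ≤ d) (hd2 : d^2 = u^2+u*v+v^2)
    (ha1 : |u| ≤ P + 1/2) (ha2 : P - 1/2 ≤ |u|) (hb1 : |v| ≤ Q + 1/2) (hb2 : Q - 1/2 ≤ |v|)
    (hPn : 0 ≤ P) (hQn : 0 ≤ Q) :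
    r/5 ≤ 1 + (P + Q) ∧ (1 + (P+Q))/2 ≤ 1 + d := by
  set a := |u| with ha
  set b := |v| with hb
  have han : 0 ≤ a := abs_nonneg u
  have hbn : 0 ≤ b := abs_nonneg v
  have hsqa : a^2 = u^2 := sq_abs u
  have hsqb : b^2 = v^2 := sq_abs v
  have huv1 : u*v ≤ a*b := by rw [ha, hb, ← abs_mul]; exact le_abs_self _
  have huv2 : -(a*b) ≤ u*v := by rw [ha, hb, ← abs_mul]; exact neg_abs_le _
  have hd1 : (1:ℝ) ≤ d := le_trans hr hd
  have A1 : (a+b)^2 ≤ 4*d^2 := by nlinarith [sq_nonneg (a-b)]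
  have A2 : d^2 ≤ 2*(a+b)^2 := by nlinarith [mul_nonneg han hbn]
  have hab2d : a + b ≤ 2*d := by
    by_contra hc
    push_neg at hc
    nlinarith [mul_pos (show (0:ℝ) < a+b-2*d by linarith)
      (show (0:ℝ) < a+b+2*d by linarith)]
  constructor
  · have hub : a + b ≤ P + Q + 1 := by linarith
    have hd2' : d^2 ≤ 2*(P+Q+1)^2 := by nlinarith
    have hr2 : r^2 ≤ d^2 := by nlinarith
    by_contra hc
    push_neg at hc
    nlinarith [mul_pos (show (0:ℝ) < P+Q+1 by linarith)
      (show (0:ℝ) < P+Q+1 by linarith)]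
  · linarith

lemma invpow_le (d k : ℝ) (hk : 0 ≤ k) (hle : (1+k)/2 ≤ 1+d) (hd : 0 ≤ d) :
    ((1+d)^6)⁻¹ ≤ 64*((1+k)^6)⁻¹ := by
  have hpow : (((1:ℝ)+k)/2)^6 ≤ (1+d)^6 := pow_le_pow_left₀ (by positivity) hle 6
  have hinv : ((1+d)^6)⁻¹ ≤ ((((1:ℝ)+k)/2)^6)⁻¹ := inv_anti₀ (by positivity) hpow
  calc ((1+d)^6)⁻¹ ≤ ((((1:ℝ)+k)/2)^6)⁻¹ := hinv
    _ = 64 * (((1:ℝ)+k)^6)⁻¹ := by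
        rw [div_pow, inv_div, div_eq_mul_inv]
        norm_num

set_option maxHeartbeats 1000000 in
lemma Zsum (x : E2) (r : ℝ) (hr : 1 ≤ r) :
    Summable (wfun x r) ∧ ∑' z : ℤ × ℤ, wfun x r z ≤ 1440000 * ((r^4))⁻¹ := by
  obtain ⟨α, β, hαβ⟩ := coords x
  set m0 := round α with hm0
  set n0 := round β with hn0
  have hTm := Tmaj_total r hr
  have key : ∀ z : ℤ × ℤ, wfun x r z ≤ 64 * Tmaj r (sig m0 n0 z) := by
    intro z
    by_cases hd : r ≤ ‖f z - x‖
    case neg =>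
      rw [wfun, if_neg hd]
      exact mul_nonneg (by norm_num) (Tmaj_nonneg _ _)
    case pos =>
      set d := ‖f z - x‖ with hdd
      set u := ((z.1:ℝ) - α) with hu
      set v := ((z.2:ℝ) - β) with hv
      have hd2 : d^2 = u^2 + u*v + v^2 := by rw [hdd, hαβ z, norm_comb]
      set a := |u| with ha
      set b := |v| with hb
      set P := ((z.1 - m0).natAbs : ℝ) with hP
      set Q := ((z.2 - n0).natAbs : ℝ) with hQ
      have hkcast : ((kz m0 n0 z : ℕ) : ℝ) = P + Q := by
        rw [hP, hQ]; unfold kz; push_cast; ring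
      have hPabs : P = |(z.1:ℝ) - (m0:ℝ)| := by
        rw [hP, Nat.cast_natAbs]; push_cast; ring_nf
      have hQabs : Q = |(z.2:ℝ) - (n0:ℝ)| := by
        rw [hQ, Nat.cast_natAbs]; push_cast; ring_nf
      have hround1 : |α - (m0:ℝ)| ≤ 1/2 := by rw [hm0]; exact abs_sub_round α
      have hround2 : |β - (n0:ℝ)| ≤ 1/2 := by rw [hn0]; exact abs_sub_round β
      -- a vs P
      have ha1 : a ≤ P + 1/2 := by
        have : u = ((z.1:ℝ) - m0) + ((m0:ℝ) - α) := by rw [hu]; ring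
        calc a = |((z.1:ℝ) - m0) + ((m0:ℝ) - α)| := by rw [ha, this]
          _ ≤ |(z.1:ℝ) - m0| + |(m0:ℝ) - α| := abs_add_le _ _
          _ ≤ P + 1/2 := by
              rw [hPabs]
              have := abs_sub_comm α (m0:ℝ)
              apply add_le_add le_rfl
              rw [← this]; exact hround1
      have ha2 : P - 1/2 ≤ a := by
        have h1 : ((z.1:ℝ) - m0) = u + (α - (m0:ℝ)) := by rw [hu]; ring
        have : P ≤ a + 1/2 := by
          calc P = |u + (α - (m0:ℝ))| := by rw [hPabs, h1]
            _ ≤ |u| + |α - (m0:ℝ)| := abs_add_le _ _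
            _ ≤ a + 1/2 := add_le_add le_rfl hround1
        linarith
      have hb1 : b ≤ Q + 1/2 := by
        have : v = ((z.2:ℝ) - n0) + ((n0:ℝ) - β) := by rw [hv]; ring
        calc b = |((z.2:ℝ) - n0) + ((n0:ℝ) - β)| := by rw [hb, this]
          _ ≤ |(z.2:ℝ) - n0| + |(n0:ℝ) - β| := abs_add_le _ _
          _ ≤ Q + 1/2 := by
              rw [hQabs]
              apply add_le_add le_rfl
              rw [abs_sub_comm]; exact hround2
      have hb2 : Q - 1/2 ≤ b := by
        have h1 : ((z.2:ℝ) - n0) = v + (β - (n0:ℝ)) := by rw [hv]; ring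
        have : Q ≤ b + 1/2 := by
          calc Q = |v + (β - (n0:ℝ))| := by rw [hQabs, h1]
            _ ≤ |v| + |β - (n0:ℝ)| := abs_add_le _ _
            _ ≤ b + 1/2 := add_le_add le_rfl hround2
        linarith
      have hPn : 0 ≤ P := by rw [hP]; positivity
      have hQn : 0 ≤ Q := by rw [hQ]; positivity
      obtain ⟨hcond', h1d'⟩ := pw_arith r d u v P Q hr hd hd2 ha1 ha2 hb1 hb2 hPn hQn
      have hcond : r/5 ≤ 1 + ((kz m0 n0 z : ℕ) : ℝ) := by rw [hkcast]; exact hcond'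
      have h1d : ((1:ℝ) + ((kz m0 n0 z : ℕ) : ℝ))/2 ≤ 1 + d := by rw [hkcast]; exact h1d'
      have hTt : Tmaj r (sig m0 n0 z) = (((1:ℝ) + ((kz m0 n0 z : ℕ) : ℝ))^6)⁻¹ := by
        unfold Tmaj sig
        rw [if_pos]
        constructor
        · show (z.1 - m0).natAbs ≤ kz m0 n0 z
          unfold kz
          exact Nat.le_add_right _ _
        · exact hcond
      rw [wfun, if_pos hd, hTt, ← hdd]
      exact invpow_le d ((kz m0 n0 z : ℕ) : ℝ) (by positivity) h1d
        (le_trans (by linarith) hd)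
  have hsum_maj : Summable (fun z : ℤ × ℤ => 64 * Tmaj r (sig m0 n0 z)) :=
    (hTm.1.comp_injective (sig_inj m0 n0)).mul_left 64
  have hws : Summable (wfun x r) :=
    Summable.of_nonneg_of_le (wfun_nonneg x r) key hsum_maj
  refine ⟨hws, ?_⟩
  calc ∑' z : ℤ × ℤ, wfun x r z
      ≤ ∑' z : ℤ × ℤ, 64 * Tmaj r (sig m0 n0 z) := Summable.tsum_le_tsum key hws hsum_maj
    _ = 64 * ∑' z : ℤ × ℤ, Tmaj r (sig m0 n0 z) := tsum_mul_left
    _ ≤ 64 * ∑' q : ℕ × ℤ × Bool, Tmaj r q := by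
        apply mul_le_mul_of_nonneg_left _ (by norm_num)
        exact Summable.tsum_le_tsum_of_inj (sig m0 n0) (sig_inj m0 n0)
          (fun c _ => Tmaj_nonneg r c) (fun z => le_rfl)
          (hTm.1.comp_injective (sig_inj m0 n0)) hTm.1
    _ ≤ 64 * (36 * ((r/5)^4)⁻¹) := mul_le_mul_of_nonneg_left hTm.2 (by norm_num)
    _ = 1440000 * ((r^4))⁻¹ := by
        have hr0 : (0:ℝ) < r := by linarith
        rw [div_pow]
        rw [inv_div]
        field_simp
        ring

/-! ### the bond sum -/

def psi (x : E2) (r : ℝ) (b : E2 × E2) : ℝ :=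
  if r ≤ ‖b.1 - x‖ then ((1+‖b.1-x‖)^6)⁻¹ else 0

lemma psi_nonneg (x : E2) (r : ℝ) (b : E2 × E2) : 0 ≤ psi x r b := by
  unfold psi; split <;> positivity

def iota (b : ↥Bonds) : (ℤ × ℤ) × Fin 6 :=
  ⟨(bond_repr b.2).choose, (bond_repr b.2).choose_spec.choose⟩

lemma iota_spec (b : ↥Bonds) :
    (b : E2 × E2).1 = f (iota b).1 ∧ (b : E2 × E2).2 = f ((iota b).1 + dirs (iota b).2) :=
  (bond_repr b.2).choose_spec.choose_spec

lemma iota_inj : Function.Injective iota := by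
  intro b b' h
  have s1 := iota_spec b
  have s2 := iota_spec b'
  apply Subtype.ext
  apply Prod.ext_iff.mpr
  constructor
  · rw [s1.1, s2.1, h]
  · rw [s1.2, s2.2, h]

lemma bond_sum (x : E2) (r : ℝ) (hr : 1 ≤ r) :
    Summable (fun b : ↥Bonds => psi x r (b : E2 × E2)) ∧
      ∑' b : ↥Bonds, psi x r (b : E2 × E2) ≤ 8640000 * ((r^4))⁻¹ := by
  obtain ⟨hzs, hzb⟩ := Zsum x r hr
  have hconst : ∀ z : ℤ × ℤ, ∑' _ : Fin 6, wfun x r z = 6 * wfun x r z := by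
    intro z
    rw [tsum_fintype, Finset.sum_const, Finset.card_univ, Fintype.card_fin, nsmul_eq_mul]
    norm_num
  have hprod : Summable (fun pr : (ℤ × ℤ) × Fin 6 => wfun x r pr.1) := by
    apply (summable_prod_of_nonneg (fun pr => wfun_nonneg x r pr.1)).mpr
    refine ⟨fun z => Summable.of_finite, ?_⟩
    have : (fun z : ℤ × ℤ => ∑' _ : Fin 6, wfun x r z) = fun z => 6 * wfun x r z := by
      funext z; exact hconst z
    rw [this]
    exact hzs.mul_left 6
  have key : ∀ b : ↥Bonds, psi x r (b : E2 × E2) = wfun x r (iota b).1 := by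
    intro b
    unfold psi wfun
    rw [(iota_spec b).1]
  have hsummable : Summable (fun b : ↥Bonds => psi x r (b : E2 × E2)) := by
    have : (fun b : ↥Bonds => psi x r (b : E2 × E2))
        = (fun pr : (ℤ × ℤ) × Fin 6 => wfun x r pr.1) ∘ iota := by
      funext b; exact key b
    rw [this]
    exact hprod.comp_injective iota_inj
  refine ⟨hsummable, ?_⟩
  have hle : ∑' b : ↥Bonds, psi x r (b : E2 × E2)
      ≤ ∑' pr : (ℤ × ℤ) × Fin 6, wfun x r pr.1 :=
    Summable.tsum_le_tsum_of_inj iota iota_inj (fun c _ => wfun_nonneg x r c.1)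
      (fun b => le_of_eq (key b)) hsummable hprod
  have heq : ∑' pr : (ℤ × ℤ) × Fin 6, wfun x r pr.1 = 6 * ∑' z : ℤ × ℤ, wfun x r z := by
    rw [Summable.tsum_prod' hprod (fun z => Summable.of_finite)]
    calc ∑' (z : ℤ × ℤ) (_ : Fin 6), wfun x r z
        = ∑' z : ℤ × ℤ, 6 * wfun x r z := by
          congr 1; funext z; exact hconst z
      _ = 6 * ∑' z : ℤ × ℤ, wfun x r z := tsum_mul_left
  calc ∑' b : ↥Bonds, psi x r (b : E2 × E2)
      ≤ ∑' pr : (ℤ × ℤ) × Fin 6, wfun x r pr.1 := hle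
    _ = 6 * ∑' z : ℤ × ℤ, wfun x r z := heq
    _ ≤ 6 * (1440000 * ((r^4))⁻¹) := mul_le_mul_of_nonneg_left hzb (by norm_num)
    _ = 8640000 * ((r^4))⁻¹ := by ring

end S17

/-- Residual decay estimate away from the cores: if |g_b| ≤ K Σᵢ (1+dist(b,xᵢ))⁻³ and Dv
is supported on bonds at distance ≥ r from every xᵢ, then
|Σ_b g_b Dv_b| ≤ C K N r⁻² ‖Dv‖_{ℓ²}. -/
theorem stmt17 :
    ∃ C : ℝ, 0 < C ∧
      ∀ (K : ℝ), 0 ≤ K → ∀ (N : ℕ) (x : Fin N → E2) (g : E2 × E2 → ℝ) (v : E2 → ℝ) (r : ℝ),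
      1 ≤ r →
      (∀ b ∈ Bonds, |g b| ≤ K * ∑ i : Fin N, (1 + ‖b.1 - x i‖)⁻¹ ^ 3) →
      (∀ b ∈ Bonds, v b.2 - v b.1 ≠ 0 → ∀ i : Fin N, r ≤ ‖b.1 - x i‖) →
      Summable (fun b : Bonds => (v (b : E2 × E2).2 - v (b : E2 × E2).1) ^ 2) →
      |∑' b : Bonds, g (b : E2 × E2) * (v (b : E2 × E2).2 - v (b : E2 × E2).1)| ≤
        C * K * N / r ^ 2 *
          Real.sqrt (∑' b : Bonds, (v (b : E2 × E2).2 - v (b : E2 × E2).1) ^ 2) := by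
  classical
  refine ⟨3000, by norm_num, ?_⟩
  intro K hK N x g v r hr hg hsupp hsum
  set D : ↥Bonds → ℝ := fun b => v (b : E2 × E2).2 - v (b : E2 × E2).1 with hD
  set h : ↥Bonds → ℝ := fun b => if D b = 0 then 0 else |g (b : E2 × E2)| with hh
  have hr0 : (0:ℝ) < r := by linarith
  have hhn : ∀ b, 0 ≤ h b := by
    intro b; rw [hh]; dsimp only; split
    · exact le_rfl
    · exact abs_nonneg _
  -- pointwise square bound
  have hsq : ∀ b : ↥Bonds, h b ^ 2 ≤ K^2 * N * ∑ i : Fin N, S17.psi (x i) r (b : E2 × E2) := by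
    intro b
    have hpsin : (0:ℝ) ≤ ∑ i : Fin N, S17.psi (x i) r (b : E2 × E2) :=
      Finset.sum_nonneg (fun i _ => S17.psi_nonneg _ _ _)
    by_cases hDb : D b = 0
    · rw [hh]; dsimp only; rw [if_pos hDb]
      have : (0:ℝ)^2 = 0 := by norm_num
      rw [this]
      positivity
    · rw [hh]; dsimp only; rw [if_neg hDb]
      have hb := hg (b : E2 × E2) b.2
      have hdist := hsupp (b : E2 × E2) b.2 hDb
      have hpsi_eq : ∀ i : Fin N,
          ((1 + ‖(b : E2 × E2).1 - x i‖)⁻¹ ^ 3)^2 = S17.psi (x i) r (b : E2 × E2) := by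
        intro i
        unfold S17.psi
        rw [if_pos (hdist i)]
        rw [← pow_mul, inv_pow]
      have hCS : (∑ i : Fin N, (1 + ‖(b : E2 × E2).1 - x i‖)⁻¹ ^ 3)^2
          ≤ (N : ℝ) * ∑ i : Fin N, ((1 + ‖(b : E2 × E2).1 - x i‖)⁻¹ ^ 3)^2 := by
        have := Finset.sum_mul_sq_le_sq_mul_sq Finset.univ
          (fun i : Fin N => (1 + ‖(b : E2 × E2).1 - x i‖)⁻¹ ^ 3) (fun _ => (1:ℝ))
        simp only [mul_one, one_pow] at this
        calc (∑ i : Fin N, (1 + ‖(b : E2 × E2).1 - x i‖)⁻¹ ^ 3)^2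
            ≤ (∑ i : Fin N, ((1 + ‖(b : E2 × E2).1 - x i‖)⁻¹ ^ 3)^2) * (∑ _i : Fin N, (1:ℝ)) := this
          _ = (N : ℝ) * ∑ i : Fin N, ((1 + ‖(b : E2 × E2).1 - x i‖)⁻¹ ^ 3)^2 := by
              rw [Finset.sum_const]
              simp [mul_comm]
      have hsum_nonneg : (0:ℝ) ≤ ∑ i : Fin N, (1 + ‖(b : E2 × E2).1 - x i‖)⁻¹ ^ 3 :=
        Finset.sum_nonneg (fun i _ => by positivity)
      have h1 : |g (b : E2 × E2)|^2 ≤ (K * ∑ i : Fin N, (1 + ‖(b : E2 × E2).1 - x i‖)⁻¹ ^ 3)^2 := by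
        apply pow_le_pow_left₀ (abs_nonneg _) hb
      calc |g (b : E2 × E2)|^2
          ≤ (K * ∑ i : Fin N, (1 + ‖(b : E2 × E2).1 - x i‖)⁻¹ ^ 3)^2 := h1
        _ = K^2 * (∑ i : Fin N, (1 + ‖(b : E2 × E2).1 - x i‖)⁻¹ ^ 3)^2 := by ring
        _ ≤ K^2 * ((N : ℝ) * ∑ i : Fin N, ((1 + ‖(b : E2 × E2).1 - x i‖)⁻¹ ^ 3)^2) :=
            mul_le_mul_of_nonneg_left hCS (by positivity)
        _ = K^2 * N * ∑ i : Fin N, ((1 + ‖(b : E2 × E2).1 - x i‖)⁻¹ ^ 3)^2 := by ring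
        _ = K^2 * N * ∑ i : Fin N, S17.psi (x i) r (b : E2 × E2) := by
            congr 1
            exact Finset.sum_congr rfl (fun i _ => hpsi_eq i)
  -- summability of the majorant
  have hpsi_sum : ∀ i : Fin N, Summable (fun b : ↥Bonds => S17.psi (x i) r (b : E2 × E2)) :=
    fun i => (S17.bond_sum (x i) r hr).1
  have hFs : Summable (fun b : ↥Bonds => K^2 * N * ∑ i : Fin N, S17.psi (x i) r (b : E2 × E2)) :=
    (summable_sum (fun i _ => hpsi_sum i)).mul_left _
  have hh2s : Summable (fun b : ↥Bonds => h b ^ 2) :=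
    Summable.of_nonneg_of_le (fun b => sq_nonneg _) hsq hFs
  -- bound on A
  set A : ℝ := ∑' b : ↥Bonds, h b ^ 2 with hA
  set B : ℝ := ∑' b : ↥Bonds, D b ^ 2 with hB
  have hBn : 0 ≤ B := tsum_nonneg (fun b => sq_nonneg _)
  have hAn : 0 ≤ A := tsum_nonneg (fun b => sq_nonneg _)
  have hAle : A ≤ 8640000 * K^2 * N^2 * ((r^4))⁻¹ := by
    have step1 : A ≤ ∑' b : ↥Bonds, K^2 * N * ∑ i : Fin N, S17.psi (x i) r (b : E2 × E2) :=
      Summable.tsum_le_tsum hsq hh2s hFs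
    have step2 : ∑' b : ↥Bonds, K^2 * N * ∑ i : Fin N, S17.psi (x i) r (b : E2 × E2)
        = K^2 * N * ∑ i : Fin N, ∑' b : ↥Bonds, S17.psi (x i) r (b : E2 × E2) := by
      rw [tsum_mul_left]
      congr 1
      exact Summable.tsum_finsetSum (fun i _ => hpsi_sum i)
    have step3 : ∑ i : Fin N, ∑' b : ↥Bonds, S17.psi (x i) r (b : E2 × E2)
        ≤ (N : ℝ) * (8640000 * ((r^4))⁻¹) := by
      calc ∑ i : Fin N, ∑' b : ↥Bonds, S17.psi (x i) r (b : E2 × E2)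
          ≤ ∑ _i : Fin N, 8640000 * ((r^4))⁻¹ :=
            Finset.sum_le_sum (fun i _ => (S17.bond_sum (x i) r hr).2)
        _ = (N : ℝ) * (8640000 * ((r^4))⁻¹) := by
            rw [Finset.sum_const]; simp [mul_comm]
    calc A ≤ K^2 * N * ∑ i : Fin N, ∑' b : ↥Bonds, S17.psi (x i) r (b : E2 × E2) := by
          rw [← step2]; exact step1
      _ ≤ K^2 * N * ((N : ℝ) * (8640000 * ((r^4))⁻¹)) := by
          apply mul_le_mul_of_nonneg_left step3 (by positivity)
      _ = 8640000 * K^2 * N^2 * ((r^4))⁻¹ := by ring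
  -- finset Cauchy-Schwarz
  have hCSfin : ∀ s : Finset ↥Bonds,
      ∑ b ∈ s, |g (b : E2 × E2) * D b| ≤ Real.sqrt A * Real.sqrt B := by
    intro s
    have habs_eq : ∀ b : ↥Bonds, |g (b : E2 × E2) * D b| = h b * |D b| := by
      intro b
      by_cases hDb : D b = 0
      · rw [hh]; dsimp only; rw [if_pos hDb, hDb]; simp
      · rw [hh]; dsimp only; rw [if_neg hDb, abs_mul]
    have hX : ∑ b ∈ s, h b ^ 2 ≤ A :=
      Summable.sum_le_tsum s (fun b _ => sq_nonneg _) hh2s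
    have hY : ∑ b ∈ s, D b ^ 2 ≤ B :=
      Summable.sum_le_tsum s (fun b _ => sq_nonneg _) hsum
    have hCS := Finset.sum_mul_sq_le_sq_mul_sq s h (fun b => |D b|)
    have habs2 : ∀ b : ↥Bonds, |D b| ^ 2 = D b ^ 2 := fun b => sq_abs _
    have hCS' : (∑ b ∈ s, h b * |D b|)^2 ≤ A * B := by
      calc (∑ b ∈ s, h b * |D b|)^2
          ≤ (∑ b ∈ s, h b ^ 2) * (∑ b ∈ s, |D b| ^ 2) := hCS
        _ = (∑ b ∈ s, h b ^ 2) * (∑ b ∈ s, D b ^ 2) := by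
            congr 1; exact Finset.sum_congr rfl (fun b _ => habs2 b)
        _ ≤ A * B := by
            apply mul_le_mul hX hY (Finset.sum_nonneg (fun b _ => sq_nonneg _)) hAn
    have hsum_nn : 0 ≤ ∑ b ∈ s, h b * |D b| :=
      Finset.sum_nonneg (fun b _ => mul_nonneg (hhn b) (abs_nonneg _))
    have : ∑ b ∈ s, h b * |D b| ≤ Real.sqrt (A * B) := by
      rw [Real.le_sqrt hsum_nn (by positivity)]
      exact hCS'
    calc ∑ b ∈ s, |g (b : E2 × E2) * D b| = ∑ b ∈ s, h b * |D b| :=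
          Finset.sum_congr rfl (fun b _ => habs_eq b)
      _ ≤ Real.sqrt (A * B) := this
      _ = Real.sqrt A * Real.sqrt B := Real.sqrt_mul hAn B
  have habs_sum : Summable (fun b : ↥Bonds => |g (b : E2 × E2) * D b|) :=
    summable_of_sum_le (fun b => abs_nonneg _) hCSfin
  have hgD_sum : Summable (fun b : ↥Bonds => g (b : E2 × E2) * D b) :=
    summable_abs_iff.mp habs_sum
  have htsum_abs : ∑' b : ↥Bonds, |g (b : E2 × E2) * D b| ≤ Real.sqrt A * Real.sqrt B :=
    Summable.tsum_le_of_sum_le habs_sum hCSfin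
  have hmain : |∑' b : ↥Bonds, g (b : E2 × E2) * D b| ≤ Real.sqrt A * Real.sqrt B := by
    have := norm_tsum_le_tsum_norm (f := fun b : ↥Bonds => g (b : E2 × E2) * D b)
      (by simpa [Real.norm_eq_abs, abs_mul] using habs_sum)
    rw [Real.norm_eq_abs] at this
    simp only [Real.norm_eq_abs] at this
    exact le_trans this htsum_abs
  -- numeric bound on sqrt A
  have hsqrtA : Real.sqrt A ≤ 3000 * K * N / r^2 := by
    have hbound : A ≤ (3000 * K * N / r^2)^2 := by
      have he : (3000 * K * (N:ℝ) / r^2)^2 = 9000000 * K^2 * (N:ℝ)^2 * ((r^4))⁻¹ := by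
        rw [div_pow]
        have : (r^2)^2 = r^4 := by ring
        rw [this]
        rw [div_eq_mul_inv]
        ring
      rw [he]
      have : (0:ℝ) ≤ K^2 * (N:ℝ)^2 * ((r^4))⁻¹ := by positivity
      nlinarith [hAle]
    calc Real.sqrt A ≤ Real.sqrt ((3000 * K * N / r^2)^2) := Real.sqrt_le_sqrt hbound
      _ = 3000 * K * N / r^2 := Real.sqrt_sq (by positivity)
  calc |∑' b : ↥Bonds, g (b : E2 × E2) * D b| ≤ Real.sqrt A * Real.sqrt B := hmain
    _ ≤ (3000 * K * N / r^2) * Real.sqrt B :=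
        mul_le_mul_of_nonneg_right hsqrtA (Real.sqrt_nonneg _)
    _ = 3000 * K * N / r^2 * Real.sqrt B := by ring
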